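/- Fix a cost function ρ : X × X → ℝ≥0 ∪ {∞} with ρ(x,x) = 0 for all x. For distributions D₁, D₂ on X and any D₁' ∈ C_ρ(D₁), there exists D₂' ∈ C_ρ(D₂) such that d_TV(D₁', D₂') ≤ d_TV(D₁, D₂). Here C_ρ(D) is the set of distributions D' such that there exists a coupling of x ∼ D and x' ∼ D' with E[ρ(x,x')] ≤ 1. -/
import Mathlib


open Finset
open scoped Classical ENNReal

noncomputable section

/-- `p` is a probability mass function on the finite space `X`. -/
def IsPMF {X : Type*} [Fintype X] (p : X → ℝ) : Prop :=
  (∀ x, 0 ≤ p x) ∧ ∑ x, p x = 1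

/-- Total variation distance between two pmfs on a finite space. -/
noncomputable def TV {X : Type*} [Fintype X] (q r : X → ℝ) : ℝ :=
  (∑ x, |q x - r x|) / 2

/-- `π` is a coupling of the pmfs `q` and `r`. -/
def IsCoupling {X : Type*} [Fintype X] (π : X × X → ℝ) (q r : X → ℝ) : Prop :=
  IsPMF π ∧ (∀ x, ∑ y, π (x, y) = q x) ∧ (∀ y, ∑ x, π (x, y) = r y)

/-- `D' ∈ C_ρ(D)`: there is a coupling of `x ∼ D` and `x' ∼ D'` with `E[ρ(x,x')] ≤ 1`. -/
def InCorr {X : Type*} [Fintype X] (ρ : X → X → ℝ≥0∞) (D D' : X → ℝ) : Prop :=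
  ∃ π : X × X → ℝ, IsCoupling π D D' ∧
    ∑ xy : X × X, ENNReal.ofReal (π xy) * ρ xy.1 xy.2 ≤ 1

/-- Lipschitzness of corruptions: for any cost function `ρ`, distributions `D₁, D₂`, and any
`D₁' ∈ C_ρ(D₁)`, there is `D₂' ∈ C_ρ(D₂)` with `d_TV(D₁', D₂') ≤ d_TV(D₁, D₂)`. -/
theorem statement9 {X : Type*} [Fintype X] (ρ : X → X → ℝ≥0∞) (hρ : ∀ x, ρ x x = 0)
    (D₁ D₂ D₁' : X → ℝ) (hD₁ : IsPMF D₁) (hD₂ : IsPMF D₂) (hD₁' : IsPMF D₁')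
    (h : InCorr ρ D₁ D₁') :
    ∃ D₂' : X → ℝ, IsPMF D₂' ∧ InCorr ρ D₂ D₂' ∧ TV D₁' D₂' ≤ TV D₁ D₂ := by
  obtain ⟨π, ⟨⟨hπnn, hπsum⟩, hπ1, hπ2⟩, hcost⟩ := h
  have hD1nn := hD₁.1
  have hD2nn := hD₂.1
  set m : X → ℝ := fun x => min (D₁ x) (D₂ x) with hm
  set c : X → ℝ := fun x => if D₁ x = 0 then 0 else m x / D₁ x with hc
  have hmnn : ∀ x, 0 ≤ m x := fun x => le_min (hD1nn x) (hD2nn x)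
  have hmD1 : ∀ x, m x ≤ D₁ x := fun x => min_le_left _ _
  have hmD2 : ∀ x, m x ≤ D₂ x := fun x => min_le_right _ _
  have hc0 : ∀ x, 0 ≤ c x := by
    intro x; simp only [hc]
    split_ifs with h0
    · exact le_refl 0
    · exact div_nonneg (hmnn x) (hD1nn x)
  have hc1 : ∀ x, c x ≤ 1 := by
    intro x; simp only [hc]
    split_ifs with h0
    · norm_num
    · exact div_le_one_of_le₀ (hmD1 x) (hD1nn x)
  have hcD : ∀ x, c x * D₁ x = m x := by
    intro x; simp only [hc]
    split_ifs with h0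
    · simp [hm, h0, min_eq_left (hD2nn x)]
    · field_simp
  set π₂ : X × X → ℝ :=
    fun p => c p.1 * π p + (D₂ p.1 - m p.1) * (if p.2 = p.1 then 1 else 0) with hπ₂def
  have hπ₂nn : ∀ p, 0 ≤ π₂ p := by
    intro p
    apply add_nonneg (mul_nonneg (hc0 _) (hπnn _))
    apply mul_nonneg (by linarith [hmD2 p.1])
    split_ifs <;> norm_num
  have hrow : ∀ x, ∑ y, π₂ (x, y) = D₂ x := by
    intro x
    simp only [hπ₂def]
    rw [Finset.sum_add_distrib, ← Finset.mul_sum, hπ1 x, hcD]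
    have : ∑ y, (D₂ x - m x) * (if y = x then 1 else 0) = D₂ x - m x := by simp
    rw [this]; ring
  refine ⟨fun y => ∑ x, π₂ (x, y), ⟨fun y => Finset.sum_nonneg fun x _ => hπ₂nn _, ?_⟩,
    ⟨π₂, ⟨⟨hπ₂nn, ?_⟩, hrow, fun y => rfl⟩, ?_⟩, ?_⟩
  · rw [Finset.sum_comm]
    simp_rw [hrow]
    exact hD₂.2
  · rw [Fintype.sum_prod_type]
    simp_rw [hrow]
    exact hD₂.2
  · refine le_trans (Finset.sum_le_sum fun p _ => ?_) hcost
    rcases eq_or_ne p.2 p.1 with he | he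
    · have : ρ p.1 p.2 = 0 := by rw [he]; exact hρ p.1
      simp [this]
    · have : π₂ p = c p.1 * π p := by simp [hπ₂def, he]
      rw [this]
      exact mul_le_mul_left (ENNReal.ofReal_le_ofReal
        (by nlinarith [hπnn p, hc1 p.1, hc0 p.1])) _
  · -- TV bound
    rw [TV, TV, div_le_div_iff_of_pos_right (by norm_num)]
    have key : ∀ y, |D₁' y - ∑ x, π₂ (x, y)| ≤
        (∑ x, (1 - c x) * π (x, y)) + (D₂ y - m y) := by
      intro y
      have hDy : D₁' y = ∑ x, π (x, y) := (hπ2 y).symm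
      have hsum : ∑ x, π₂ (x, y) =
          (∑ x, c x * π (x, y)) + (D₂ y - m y) := by
        simp only [hπ₂def]
        rw [Finset.sum_add_distrib]
        congr 1
        simp
      rw [hDy, hsum]
      have h1 : D₁' y - D₁' y = 0 := by ring
      have hA : (0:ℝ) ≤ ∑ x, (1 - c x) * π (x, y) :=
        Finset.sum_nonneg fun x _ => mul_nonneg (by linarith [hc1 x]) (hπnn _)
      have hB : (0:ℝ) ≤ D₂ y - m y := by linarith [hmD2 y]
      have hAB : ∑ x, (1 - c x) * π (x, y) =
          (∑ x, π (x, y)) - ∑ x, c x * π (x, y) := by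
        rw [← Finset.sum_sub_distrib]
        exact Finset.sum_congr rfl fun x _ => by ring
      have : (∑ x, π (x, y)) - ((∑ x, c x * π (x, y)) + (D₂ y - m y)) =
          (∑ x, (1 - c x) * π (x, y)) - (D₂ y - m y) := by
        rw [hAB]; ring
      rw [this]
      calc |(∑ x, (1 - c x) * π (x, y)) - (D₂ y - m y)|
          ≤ |∑ x, (1 - c x) * π (x, y)| + |D₂ y - m y| := abs_sub _ _
        _ = (∑ x, (1 - c x) * π (x, y)) + (D₂ y - m y) := by
            rw [abs_of_nonneg hA, abs_of_nonneg hB]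
    calc ∑ y, |D₁' y - ∑ x, π₂ (x, y)|
        ≤ ∑ y, ((∑ x, (1 - c x) * π (x, y)) + (D₂ y - m y)) :=
          Finset.sum_le_sum fun y _ => key y
      _ = (∑ y, ∑ x, (1 - c x) * π (x, y)) + ∑ y, (D₂ y - m y) :=
          Finset.sum_add_distrib
      _ = (∑ x, (D₁ x - m x)) + ∑ y, (D₂ y - m y) := by
          congr 1
          rw [Finset.sum_comm]
          refine Finset.sum_congr rfl fun x _ => ?_
          rw [← Finset.mul_sum, hπ1 x, sub_mul, one_mul, hcD]
      _ = ∑ x, |D₁ x - D₂ x| := by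
          rw [← Finset.sum_add_distrib]
          refine Finset.sum_congr rfl fun x _ => ?_
          rcases le_total (D₁ x) (D₂ x) with hle | hle
          · rw [hm, abs_of_nonpos (by linarith)]
            simp only [min_eq_left hle]; ring
          · rw [hm, abs_of_nonneg (by linarith)]
            simp only [min_eq_right hle]; ring
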